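/- If ∑_{i=1}^∞ b_i² = ∞ then there is asymptotic arbitrage: there exists a sequence of finitely supported strategies φ(k) such that E V(φ(k)) → ∞ and var(V(φ(k))) → 0, where V(φ) = ∑_i φ_i(ε_i - b_i). Conversely, if ∑_i b_i² < ∞ then no such sequence exists. -/

import Mathlib

open MeasureTheory ProbabilityTheory Filter

section aux
variable {Ω : Type*} [MeasurableSpace Ω] (μ : Measure Ω) [IsProbabilityMeasure μ]
    (ε : ℕ → Ω → ℝ) (b : ℕ → ℝ)

theorem myMulInt (hL2 : ∀ i, MemLp (ε i) 2 μ) (i j : ℕ) :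
    Integrable (fun ω => ε i ω * ε j ω) μ := by
  have : MemLp ((ε i) • (ε j)) 1 μ :=
    (hL2 j).smul (hL2 i)
  exact this.integrable le_rfl

theorem myTsum (φ : ℕ → ℝ) (s : Finset ℕ) (hs : ∀ i ∉ s, φ i = 0) (ω : Ω) :
    (∑' i, φ i * (ε i ω - b i)) = ∑ i ∈ s, φ i * (ε i ω - b i) :=
  tsum_eq_sum (fun i hi => by rw [hs i hi, zero_mul])

theorem myMean (hL2 : ∀ i, MemLp (ε i) 2 μ) (hmean : ∀ i, ∫ ω, ε i ω ∂μ = 0)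
    (φ : ℕ → ℝ) (s : Finset ℕ) (hs : ∀ i ∉ s, φ i = 0) :
    ∫ ω, (∑' i, φ i * (ε i ω - b i)) ∂μ = -∑ i ∈ s, φ i * b i := by
  have hInt : ∀ i : ℕ, Integrable (fun ω => φ i * (ε i ω - b i)) μ := fun i =>
    (((hL2 i).integrable one_le_two).sub (integrable_const (b i))).const_mul (φ i)
  calc ∫ ω, (∑' i, φ i * (ε i ω - b i)) ∂μ
      = ∫ ω, ∑ i ∈ s, φ i * (ε i ω - b i) ∂μ := by
        congr 1; ext ω; exact myTsum ε b φ s hs ω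
    _ = ∑ i ∈ s, ∫ ω, φ i * (ε i ω - b i) ∂μ := integral_finset_sum s (fun i _ => hInt i)
    _ = -∑ i ∈ s, φ i * b i := by
        rw [← Finset.sum_neg_distrib]
        refine Finset.sum_congr rfl (fun i _ => ?_)
        rw [integral_const_mul, integral_sub ((hL2 i).integrable one_le_two)
          (integrable_const (b i)), hmean i, integral_const]
        simp

theorem myVar (hL2 : ∀ i, MemLp (ε i) 2 μ) (hmean : ∀ i, ∫ ω, ε i ω ∂μ = 0)
    (hvar : ∀ i, ∫ ω, (ε i ω) ^ 2 ∂μ = 1)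
    (huncorr : ∀ i j, i ≠ j → ∫ ω, ε i ω * ε j ω ∂μ = 0)
    (φ : ℕ → ℝ) (s : Finset ℕ) (hs : ∀ i ∉ s, φ i = 0) :
    ∫ ω, ((∑' i, φ i * (ε i ω - b i)) -
      ∫ ω', (∑' i, φ i * (ε i ω' - b i)) ∂μ) ^ 2 ∂μ = ∑ i ∈ s, (φ i) ^ 2 := by
  rw [myMean μ ε b hL2 hmean φ s hs]
  have key : ∀ ω, ((∑' i, φ i * (ε i ω - b i)) - (-∑ i ∈ s, φ i * b i)) ^ 2
      = ∑ i ∈ s, ∑ j ∈ s, (φ i * φ j) * (ε i ω * ε j ω) := by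
    intro ω
    have h1 : (∑' i, φ i * (ε i ω - b i)) - (-∑ i ∈ s, φ i * b i)
        = ∑ i ∈ s, φ i * ε i ω := by
      rw [myTsum ε b φ s hs ω, sub_neg_eq_add, ← Finset.sum_add_distrib]
      refine Finset.sum_congr rfl (fun i _ => by ring)
    rw [h1, sq, Finset.sum_mul_sum]
    refine Finset.sum_congr rfl (fun i _ => Finset.sum_congr rfl (fun j _ => by ring))
  calc ∫ ω, ((∑' i, φ i * (ε i ω - b i)) - (-∑ i ∈ s, φ i * b i)) ^ 2 ∂μ
      = ∫ ω, ∑ i ∈ s, ∑ j ∈ s, (φ i * φ j) * (ε i ω * ε j ω) ∂μ := by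
        congr 1; ext ω; exact key ω
    _ = ∑ i ∈ s, ∑ j ∈ s, (φ i * φ j) * ∫ ω, ε i ω * ε j ω ∂μ := by
        rw [integral_finset_sum s (fun i _ => integrable_finset_sum s
          (fun j _ => (myMulInt μ ε hL2 i j).const_mul _))]
        refine Finset.sum_congr rfl (fun i _ => ?_)
        rw [integral_finset_sum s (fun j _ => (myMulInt μ ε hL2 i j).const_mul _)]
        exact Finset.sum_congr rfl (fun j _ => integral_const_mul _ _)
    _ = ∑ i ∈ s, (φ i) ^ 2 := by
        refine Finset.sum_congr rfl (fun i hi => ?_)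
        rw [Finset.sum_eq_single_of_mem i hi]
        · have : ∫ ω, ε i ω * ε i ω ∂μ = 1 := by
            rw [← hvar i]; congr 1; ext ω; ring
          rw [this]; ring
        · intro j _ hj
          rw [huncorr i j (Ne.symm hj), mul_zero]

end aux

theorem stmt11 {Ω : Type*} [MeasurableSpace Ω] (μ : Measure Ω) [IsProbabilityMeasure μ]
    (ε : ℕ → Ω → ℝ) (b : ℕ → ℝ)
    (hmeas : ∀ i, Measurable (ε i))
    (hL2 : ∀ i, MemLp (ε i) 2 μ)
    (hmean : ∀ i, ∫ ω, ε i ω ∂μ = 0)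
    (hvar : ∀ i, ∫ ω, (ε i ω) ^ 2 ∂μ = 1)
    (huncorr : ∀ i j, i ≠ j → ∫ ω, ε i ω * ε j ω ∂μ = 0) :
    (¬ Summable (fun i => (b i) ^ 2) →
      ∃ ψ : ℕ → ℕ → ℝ, (∀ k, (Function.support (ψ k)).Finite) ∧
        Tendsto (fun k => ∫ ω, (∑' i, ψ k i * (ε i ω - b i)) ∂μ) atTop atTop ∧
        Tendsto
          (fun k => ∫ ω, ((∑' i, ψ k i * (ε i ω - b i)) -
            ∫ ω', (∑' i, ψ k i * (ε i ω' - b i)) ∂μ) ^ 2 ∂μ)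
          atTop (nhds 0)) ∧
    (Summable (fun i => (b i) ^ 2) →
      ¬ ∃ ψ : ℕ → ℕ → ℝ, (∀ k, (Function.support (ψ k)).Finite) ∧
        Tendsto (fun k => ∫ ω, (∑' i, ψ k i * (ε i ω - b i)) ∂μ) atTop atTop ∧
        Tendsto
          (fun k => ∫ ω, ((∑' i, ψ k i * (ε i ω - b i)) -
            ∫ ω', (∑' i, ψ k i * (ε i ω' - b i)) ∂μ) ^ 2 ∂μ)
          atTop (nhds 0)) := by
  constructor
  · -- arbitrage construction
    intro hns
    set S : ℕ → ℝ := fun k => ∑ i ∈ Finset.range k, (b i) ^ 2 with hS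
    have hStop : Tendsto S atTop atTop :=
      (not_summable_iff_tendsto_nat_atTop_of_nonneg (fun i => sq_nonneg (b i))).mp hns
    set ψ : ℕ → ℕ → ℝ := fun k i =>
      if i ∈ Finset.range k then -(b i) * (S k) ^ (-(3:ℝ)/4) else 0 with hψ
    have hsupp : ∀ k i, i ∉ Finset.range k → ψ k i = 0 := fun k i hi => if_neg hi
    refine ⟨ψ, fun k => Set.Finite.subset (Finset.range k).finite_toSet
      (fun i hi => by by_contra h; exact hi (hsupp k i h)), ?_, ?_⟩
    · have hm : ∀ k, ∫ ω, (∑' i, ψ k i * (ε i ω - b i)) ∂μ = S k * (S k) ^ (-(3:ℝ)/4) := by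
        intro k
        rw [myMean μ ε b hL2 hmean (ψ k) (Finset.range k) (hsupp k), ← Finset.sum_neg_distrib,
          hS]
        rw [Finset.sum_mul]
        refine Finset.sum_congr rfl (fun i hi => ?_)
        rw [hψ]; simp only [if_pos hi]; ring
      have heq : ∀ᶠ k in atTop, S k * (S k) ^ (-(3:ℝ)/4) = (S k) ^ ((1:ℝ)/4) := by
        filter_upwards [hStop.eventually_gt_atTop 0] with k hk
        nth_rewrite 1 [← Real.rpow_one (S k)]
        rw [← Real.rpow_add hk]
        norm_num
      have : Tendsto (fun k => (S k) ^ ((1:ℝ)/4)) atTop atTop :=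
        (tendsto_rpow_atTop (by norm_num)).comp hStop
      refine Tendsto.congr' ?_ this
      filter_upwards [heq] with k hk
      rw [hm k, hk]
    · have hv : ∀ k, ∫ ω, ((∑' i, ψ k i * (ε i ω - b i)) -
          ∫ ω', (∑' i, ψ k i * (ε i ω' - b i)) ∂μ) ^ 2 ∂μ
          = S k * ((S k) ^ (-(3:ℝ)/4)) ^ 2 := by
        intro k
        rw [myVar μ ε b hL2 hmean hvar huncorr (ψ k) (Finset.range k) (hsupp k), hS,
          Finset.sum_mul]
        refine Finset.sum_congr rfl (fun i hi => ?_)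
        rw [hψ]; simp only [if_pos hi]; ring
      have heq : ∀ᶠ k in atTop, S k * ((S k) ^ (-(3:ℝ)/4)) ^ 2 = (S k) ^ (-(1:ℝ)/2) := by
        filter_upwards [hStop.eventually_gt_atTop 0] with k hk
        have h2 : ((S k) ^ (-(3:ℝ)/4)) ^ 2 = S k ^ (-(3:ℝ)/2) := by
          rw [← Real.rpow_natCast ((S k) ^ (-(3:ℝ)/4)) 2, ← Real.rpow_mul hk.le]
          norm_num
        rw [h2]
        nth_rewrite 1 [← Real.rpow_one (S k)]
        rw [← Real.rpow_add hk]
        norm_num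
      have : Tendsto (fun k => (S k) ^ (-(1:ℝ)/2)) atTop (nhds 0) := by
        have := (tendsto_rpow_neg_atTop (y := (1:ℝ)/2) (by norm_num)).comp hStop
        refine this.congr (fun k => ?_)
        norm_num [neg_div]
      refine Tendsto.congr' ?_ this
      filter_upwards [heq] with k hk
      rw [hv k, hk]
  · -- no arbitrage
    rintro hsum ⟨ψ, hfin, hm, hv⟩
    set s : ℕ → Finset ℕ := fun k => (hfin k).toFinset with hsdef
    have hs : ∀ k, ∀ i ∉ s k, ψ k i = 0 := by
      intro k i hi
      by_contra h
      exact hi ((hfin k).mem_toFinset.mpr h)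
    have hmk : ∀ k, ∫ ω, (∑' i, ψ k i * (ε i ω - b i)) ∂μ = -∑ i ∈ s k, ψ k i * b i :=
      fun k => myMean μ ε b hL2 hmean (ψ k) (s k) (hs k)
    have hvk : ∀ k, ∫ ω, ((∑' i, ψ k i * (ε i ω - b i)) -
        ∫ ω', (∑' i, ψ k i * (ε i ω' - b i)) ∂μ) ^ 2 ∂μ = ∑ i ∈ s k, (ψ k i) ^ 2 :=
      fun k => myVar μ ε b hL2 hmean hvar huncorr (ψ k) (s k) (hs k)
    set B : ℝ := ∑' i, (b i) ^ 2 with hB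
    have hCS : ∀ k, (∫ ω, (∑' i, ψ k i * (ε i ω - b i)) ∂μ) ^ 2
        ≤ (∑ i ∈ s k, (ψ k i) ^ 2) * B := by
      intro k
      rw [hmk k, neg_pow]
      have h1 := Finset.sum_mul_sq_le_sq_mul_sq (s k) (fun i => ψ k i) (fun i => b i)
      have h2 : ∑ i ∈ s k, (b i) ^ 2 ≤ B :=
        Summable.sum_le_tsum (s k) (fun i _ => sq_nonneg (b i)) hsum
      calc ((-1:ℝ)) ^ 2 * (∑ i ∈ s k, ψ k i * b i) ^ 2
          = (∑ i ∈ s k, ψ k i * b i) ^ 2 := by ring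
        _ ≤ (∑ i ∈ s k, (ψ k i) ^ 2) * (∑ i ∈ s k, (b i) ^ 2) := h1
        _ ≤ (∑ i ∈ s k, (ψ k i) ^ 2) * B := by
            refine mul_le_mul_of_nonneg_left h2 ?_
            exact Finset.sum_nonneg (fun i _ => sq_nonneg _)
    -- squares tend to 0
    have hsq0 : Tendsto (fun k => (∫ ω, (∑' i, ψ k i * (ε i ω - b i)) ∂μ) ^ 2)
        atTop (nhds 0) := by
      have hvB : Tendsto (fun k => (∑ i ∈ s k, (ψ k i) ^ 2) * B) atTop (nhds 0) := by
        have : Tendsto (fun k => (∑ i ∈ s k, (ψ k i) ^ 2)) atTop (nhds 0) := by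
          refine hv.congr (fun k => (hvk k))
        simpa using this.mul_const B
      refine squeeze_zero (fun k => sq_nonneg _) (fun k => hCS k) hvB
    have hsqtop : Tendsto (fun k => (∫ ω, (∑' i, ψ k i * (ε i ω - b i)) ∂μ) ^ 2)
        atTop atTop := hm.atTop_mul_atTop₀ hm |>.congr (fun k => (sq _).symm)
    have h1 := hsq0.eventually (gt_mem_nhds (show (0:ℝ) < 1 by norm_num))
    have h2 := hsqtop.eventually_ge_atTop 1
    rcases (h1.and h2).exists with ⟨k, hk1, hk2⟩
    linarith
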